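/- Let X be a measurable space in which all singletons are measurable. Let μ = Σ_{i ∈ s} a_i • δ_{x_i} and ν = Σ_{j ∈ t} b_j • δ_{y_j} be finite weighted sums of Dirac measures on X (with s, t finite index sets and weights a_i, b_j in [0, ∞]). Then ν is absolutely continuous with respect to μ if and only if every point y_j whose weight b_j is nonzero belongs to the set {x_i : i ∈ s, a_i ≠ 0}; that is, ν ≪ μ if and only if the support of ν is contained in the support of μ. -/

import Mathlib

open MeasureTheory
open scoped ENNReal

/-- Let `X` be a measurable space in which singletons are measurable, and let
`μ = Σ_{i ∈ s} a i • δ_{x i}` and `ν = Σ_{j ∈ t} b j • δ_{y j}` be finite weighted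
sums of Dirac measures.  Then `ν ≪ μ` (absolute continuity) holds if and only if
every point `y j` with nonzero weight `b j` belongs to
`{x i : i ∈ s, a i ≠ 0}`, i.e. the support of `ν` is contained in the support of
`μ`. -/
theorem finite_dirac_sum_absolutelyContinuous_iff_support_subset
    {X : Type*} [MeasurableSpace X] (hsing : ∀ x : X, MeasurableSet ({x} : Set X))
    {ι κ : Type*} (s : Finset ι) (t : Finset κ)
    (a : ι → ℝ≥0∞) (b : κ → ℝ≥0∞) (x : ι → X) (y : κ → X) :
    (∑ j ∈ t, b j • Measure.dirac (y j)) ≪ (∑ i ∈ s, a i • Measure.dirac (x i)) ↔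
      ∀ j ∈ t, b j ≠ 0 → ∃ i ∈ s, a i ≠ 0 ∧ x i = y j := by
  have key : ∀ (E : Set X), MeasurableSet E →
      ((∑ i ∈ s, a i • Measure.dirac (x i)) E
        = ∑ i ∈ s, a i * Set.indicator E 1 (x i)) := by
    intro E hE
    rw [Measure.finset_sum_apply]
    refine Finset.sum_congr rfl fun i _ => ?_
    rw [Measure.smul_apply, Measure.dirac_apply' _ hE, smul_eq_mul]
  constructor
  · intro hac j hj hbj
    by_contra h
    push_neg at h
    have hμ : (∑ i ∈ s, a i • Measure.dirac (x i)) {y j} = 0 := by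
      rw [key _ (hsing (y j))]
      refine Finset.sum_eq_zero fun i hi => ?_
      by_cases ha : a i = 0
      · simp [ha]
      · have : x i ≠ y j := h i hi ha
        simp [Set.indicator_of_notMem, this]
    have hν := hac hμ
    have hle : b j * 1 ≤ (∑ j ∈ t, b j • Measure.dirac (y j)) {y j} := by
      rw [Measure.finset_sum_apply]
      calc b j * 1 = (b j • Measure.dirac (y j)) {y j} := by
            rw [Measure.smul_apply, Measure.dirac_apply' _ (hsing (y j))]
            simp
        _ ≤ _ := Finset.single_le_sum (f := fun j' => (b j' • Measure.dirac (y j')) {y j})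
            (fun _ _ => zero_le) hj
    rw [hν] at hle
    simp at hle
    exact hbj hle
  · intro hsupp
    intro E hE
    -- every i ∈ s with a i ≠ 0 has x i ∉ E
    have hx : ∀ i ∈ s, a i ≠ 0 → x i ∉ E := by
      intro i hi hai hxE
      have : a i * (Measure.dirac (x i)) E ≤ (∑ i ∈ s, a i • Measure.dirac (x i)) E := by
        rw [Measure.finset_sum_apply]
        exact Finset.single_le_sum (f := fun i => (a i • Measure.dirac (x i)) E)
          (fun _ _ => zero_le) hi
      rw [hE] at this
      have h1 : (1 : ℝ≥0∞) ≤ Measure.dirac (x i) E :=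
        (Measure.dirac_apply_of_mem hxE).ge
      have : a i * 1 ≤ 0 := le_trans (mul_le_mul_right h1 _) this
      simp at this
      exact hai this
    have : ∀ j ∈ t, (b j • Measure.dirac (y j)) E = 0 := by
      intro j hj
      by_cases hbj : b j = 0
      · simp [hbj]
      · obtain ⟨i, hi, hai, hxy⟩ := hsupp j hj hbj
        have hyE : y j ∉ E := hxy ▸ hx i hi hai
        have : Measure.dirac (y j) E ≤ Measure.dirac (y j) ({y j}ᶜ) :=
          measure_mono (fun z hz => fun hzz => hyE (Set.mem_singleton_iff.mp hzz ▸ hz))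
        rw [Measure.dirac_apply' _ (hsing (y j)).compl] at this
        simp only [Set.indicator_of_notMem (by simp : y j ∉ ({y j}ᶜ : Set X))] at this
        simp [Measure.smul_apply, le_antisymm this zero_le]
    rw [Measure.finset_sum_apply]
    exact Finset.sum_eq_zero this
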